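/- Let k be a field and m, n ≥ 1. Let A = k⟨x₁,…,x_m⟩/(x_j x_p − x₁ x_p : 2 ≤ j ≤ m, 1 ≤ p ≤ m) and B = k⟨y₁,…,y_n⟩/(y_b y_a − y₁ y_a : 2 ≤ b ≤ n, 1 ≤ a ≤ n) be the Yang–Baxter algebras of permutation idempotent solutions of orders m and n, and let C = k⟨z_{(i,a)} : 1 ≤ i ≤ m, 1 ≤ a ≤ n⟩/(z_w z_v − z_{(1,1)} z_v : w ≠ (1,1), all v) be the Yang–Baxter algebra of a permutation idempotent solution of order m n. Then the assignment z_{(i,a)} ↦ x_i ⊗ y_a extends to a well-defined k-algebra homomorphism s_{m,n} : C → A ⊗_k B (the (m,n)-Segre map), s_{m,n} is injective, and its image equals the Segre product A ∘ B = ⊕_{s ≥ 0} A_s ⊗ B_s, i.e. the k-linear span in A ⊗_k B of all elements [u] ⊗ [v] where u and v are words of equal length in the respective generators; this image is also the subalgebra of A ⊗_k B generated by {x_i ⊗ y_a : 1 ≤ i ≤ m, 1 ≤ a ≤ n}. In particular C ≅ A ∘ B. -/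

import Mathlib

noncomputable section

open FreeAlgebra

open scoped TensorProduct Pointwise

/-- The standard defining relations `z_j z_p = z_{1} z_p` (`j ≠ 1`, `1` being a chosen
first index) of the Yang–Baxter algebra of a permutation idempotent solution indexed
by a type `I` with a distinguished element. -/
def segRel (k : Type*) [Field k] (I : Type*) (i₀ : I) :
    FreeAlgebra k I → FreeAlgebra k I → Prop :=
  fun a b => ∃ w v : I, w ≠ i₀ ∧ a = ι k w * ι k v ∧ b = ι k i₀ * ι k v

/-- The Yang–Baxter algebra of a permutation idempotent solution on `I`, in its
standard presentation with distinguished generator `i₀`. -/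
abbrev SegYBA (k : Type*) [Field k] (I : Type*) (i₀ : I) := RingQuot (segRel k I i₀)

/-- The image of the generator indexed by `i` in `SegYBA k I i₀`. -/
def sgx (k : Type*) [Field k] (I : Type*) (i₀ : I) (i : I) : SegYBA k I i₀ :=
  RingQuot.mkAlgHom k (segRel k I i₀) (ι k i)

/-- The image of the word indexed by the list `w` in `SegYBA k I i₀`. -/
def sgword (k : Type*) [Field k] (I : Type*) (i₀ : I) (w : List I) : SegYBA k I i₀ :=
  RingQuot.mkAlgHom k (segRel k I i₀) ((w.map (ι k)).prod)

namespace Stmt19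

variable (k : Type*) [Field k]

section Generic

variable (I : Type*) (i₀ : I)

lemma sgword_eq_prod (w : List I) :
    sgword k I i₀ w = (w.map (sgx k I i₀)).prod := by
  unfold sgword
  rw [map_list_prod, List.map_map]
  rfl

lemma sgword_cons (a : I) (u : List I) :
    sgword k I i₀ (a :: u) = sgx k I i₀ a * sgword k I i₀ u := by
  rw [sgword_eq_prod, List.map_cons, List.prod_cons, sgword_eq_prod]

lemma sgword_nil : sgword k I i₀ [] = 1 := by
  rw [sgword_eq_prod]; simp

lemma sgword_append (u u' : List I) :
    sgword k I i₀ (u ++ u') = sgword k I i₀ u * sgword k I i₀ u' := by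
  rw [sgword_eq_prod, sgword_eq_prod, sgword_eq_prod, List.map_append, List.prod_append]

lemma sgword_singleton (a : I) : sgword k I i₀ [a] = sgx k I i₀ a := by
  rw [sgword_cons, sgword_nil, mul_one]

lemma sgx_rel (w v : I) :
    sgx k I i₀ w * sgx k I i₀ v = sgx k I i₀ i₀ * sgx k I i₀ v := by
  by_cases h : w = i₀
  · rw [h]
  · unfold sgx
    rw [← map_mul, ← map_mul]
    exact RingQuot.mkAlgHom_rel k ⟨w, v, h, rfl, rfl⟩

lemma collapse (t : ℕ) (w v : I) :
    sgx k I i₀ w * (sgx k I i₀ i₀ ^ t * sgx k I i₀ v)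
      = sgx k I i₀ i₀ ^ (t + 1) * sgx k I i₀ v := by
  cases t with
  | zero => simpa using sgx_rel k I i₀ w v
  | succ u =>
    have h1 : sgx k I i₀ i₀ ^ (u + 1) * sgx k I i₀ v
        = sgx k I i₀ i₀ * (sgx k I i₀ i₀ ^ u * sgx k I i₀ v) := by
      rw [pow_succ', mul_assoc]
    have h2 : sgx k I i₀ i₀ ^ (u + 1 + 1) * sgx k I i₀ v
        = sgx k I i₀ i₀ * (sgx k I i₀ i₀ * (sgx k I i₀ i₀ ^ u * sgx k I i₀ v)) := by
      rw [pow_succ', pow_succ', mul_assoc, mul_assoc]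
    rw [h1, h2, ← mul_assoc, sgx_rel k I i₀ w i₀, mul_assoc]

end Generic

/-- Semigroup of normal forms: `⟨t, i⟩` represents the word `z₀^t z_i` (length `t+1`). -/
structure Sg (I : Type*) where
  len : ℕ
  last : I

instance (I : Type*) : Mul (Sg I) := ⟨fun a b => ⟨a.len + b.len + 1, b.last⟩⟩

lemma Sg.mul_def {I : Type*} (a b : Sg I) : a * b = ⟨a.len + b.len + 1, b.last⟩ := rfl

instance (I : Type*) : Semigroup (Sg I) where
  mul_assoc a b c := by
    simp only [Sg.mul_def, Sg.mk.injEq, and_true]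
    omega

section Generic2

variable (I : Type*) (i₀ : I)

lemma wpow (t : ℕ) (i : I) :
    ((⟨0, i₀⟩ : Sg I) : WithOne (Sg I)) ^ t * ((⟨0, i⟩ : Sg I) : WithOne (Sg I))
      = ((⟨t, i⟩ : Sg I) : WithOne (Sg I)) := by
  induction t with
  | zero => rw [pow_zero, one_mul]
  | succ u ih =>
    rw [pow_succ', mul_assoc, ih, ← WithOne.coe_mul]
    simp only [Sg.mul_def, WithOne.coe_inj, Sg.mk.injEq, and_true]
    omega

/-- The normal-form semigroup maps multiplicatively to the Yang–Baxter algebra. -/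
def toC : Sg I →ₙ* SegYBA k I i₀ where
  toFun g := sgx k I i₀ i₀ ^ g.len * sgx k I i₀ g.last
  map_mul' a b := by
    show sgx k I i₀ i₀ ^ (a.len + b.len + 1) * sgx k I i₀ b.last
        = (sgx k I i₀ i₀ ^ a.len * sgx k I i₀ a.last) * (sgx k I i₀ i₀ ^ b.len * sgx k I i₀ b.last)
    rw [mul_assoc, collapse k I i₀, ← mul_assoc, ← pow_add, add_assoc]

/-- The algebra map from the monoid algebra of normal forms onto the Yang–Baxter algebra. -/
def ηA : MonoidAlgebra k (WithOne (Sg I)) →ₐ[k] SegYBA k I i₀ :=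
  MonoidAlgebra.lift k (SegYBA k I i₀) (WithOne (Sg I)) (WithOne.lift (toC k I i₀))

/-- The algebra map from the Yang–Baxter algebra to the monoid algebra of normal forms. -/
def ρA : SegYBA k I i₀ →ₐ[k] MonoidAlgebra k (WithOne (Sg I)) :=
  RingQuot.liftAlgHom k ⟨FreeAlgebra.lift k fun i =>
      (MonoidAlgebra.of k (WithOne (Sg I)) ((⟨0, i⟩ : Sg I) : WithOne (Sg I))), by
    rintro x y ⟨w, v, hw, rfl, rfl⟩
    simp only [map_mul, FreeAlgebra.lift_ι_apply]
    rw [← map_mul, ← map_mul, ← WithOne.coe_mul, ← WithOne.coe_mul]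
    rfl⟩

lemma rho_sgx (i : I) :
    ρA k I i₀ (sgx k I i₀ i)
      = MonoidAlgebra.of k (WithOne (Sg I)) ((⟨0, i⟩ : Sg I) : WithOne (Sg I)) := by
  unfold ρA sgx
  rw [RingQuot.liftAlgHom_mkAlgHom_apply, FreeAlgebra.lift_ι_apply]

lemma eta_of (g : Sg I) :
    ηA k I i₀ (MonoidAlgebra.of k (WithOne (Sg I)) (g : WithOne (Sg I)))
      = sgx k I i₀ i₀ ^ g.len * sgx k I i₀ g.last := by
  unfold ηA
  rw [MonoidAlgebra.lift_of, WithOne.lift_coe]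
  rfl

lemma eta_rho (x : SegYBA k I i₀) : ηA k I i₀ (ρA k I i₀ x) = x := by
  have h : (ηA k I i₀).comp (ρA k I i₀) = AlgHom.id k (SegYBA k I i₀) := by
    refine RingQuot.ringQuot_ext' k _ _ (FreeAlgebra.hom_ext (funext fun i => ?_))
    show ηA k I i₀ (ρA k I i₀ (sgx k I i₀ i)) = sgx k I i₀ i
    rw [rho_sgx, eta_of]
    simp
  calc ηA k I i₀ (ρA k I i₀ x) = ((ηA k I i₀).comp (ρA k I i₀)) x := rfl
    _ = x := by rw [h]; rfl

lemma rho_pow_mul (t : ℕ) (i : I) :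
    ρA k I i₀ (sgx k I i₀ i₀ ^ t * sgx k I i₀ i)
      = MonoidAlgebra.of k (WithOne (Sg I)) ((⟨t, i⟩ : Sg I) : WithOne (Sg I)) := by
  rw [map_mul, map_pow, rho_sgx, rho_sgx, ← map_pow, ← map_mul, wpow]

end Generic2

section Segre

variable (I : Type*) (i₀ : I) (J : Type*) (j₀ : J)

/-- The Segre map on the free algebra. -/
def fC : FreeAlgebra k (I × J) →ₐ[k] SegYBA k I i₀ ⊗[k] SegYBA k J j₀ :=
  FreeAlgebra.lift k fun p => sgx k I i₀ p.1 ⊗ₜ[k] sgx k J j₀ p.2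

lemma fC_rel : ∀ ⦃x y⦄, segRel k (I × J) (i₀, j₀) x y → fC k I i₀ J j₀ x = fC k I i₀ J j₀ y := by
  rintro x y ⟨w, v, hw, rfl, rfl⟩
  simp only [map_mul, fC, FreeAlgebra.lift_ι_apply, Algebra.TensorProduct.tmul_mul_tmul]
  rw [sgx_rel k I i₀ w.1 v.1, sgx_rel k J j₀ w.2 v.2]

/-- The Segre map. -/
def sMap : SegYBA k (I × J) (i₀, j₀) →ₐ[k] SegYBA k I i₀ ⊗[k] SegYBA k J j₀ :=
  RingQuot.liftAlgHom k ⟨fC k I i₀ J j₀, fC_rel k I i₀ J j₀⟩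

lemma sMap_sgx (p : I × J) :
    sMap k I i₀ J j₀ (sgx k (I × J) (i₀, j₀) p) = sgx k I i₀ p.1 ⊗ₜ[k] sgx k J j₀ p.2 := by
  unfold sMap sgx
  rw [RingQuot.liftAlgHom_mkAlgHom_apply]
  exact FreeAlgebra.lift_ι_apply _ _

lemma sMap_pow_mul (t : ℕ) (p : I × J) :
    sMap k I i₀ J j₀ (sgx k (I × J) (i₀, j₀) (i₀, j₀) ^ t * sgx k (I × J) (i₀, j₀) p)
      = (sgx k I i₀ i₀ ^ t * sgx k I i₀ p.1) ⊗ₜ[k] (sgx k J j₀ j₀ ^ t * sgx k J j₀ p.2) := by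
  rw [map_mul, map_pow]
  simp only [sMap_sgx]
  rw [Algebra.TensorProduct.tmul_pow, Algebra.TensorProduct.tmul_mul_tmul]

lemma sMap_sgword (w : List (I × J)) :
    sMap k I i₀ J j₀ (sgword k (I × J) (i₀, j₀) w)
      = (w.map fun p => sgx k I i₀ p.1 ⊗ₜ[k] sgx k J j₀ p.2).prod := by
  rw [sgword_eq_prod, map_list_prod, List.map_map]
  simp only [Function.comp_def, sMap_sgx]

lemma zip_tmul (u : List I) : ∀ v : List J, u.length = v.length →
    ((u.zip v).map fun p => sgx k I i₀ p.1 ⊗ₜ[k] sgx k J j₀ p.2).prod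
      = sgword k I i₀ u ⊗ₜ[k] sgword k J j₀ v := by
  induction u with
  | nil =>
    intro v hv
    have : v = [] := by
      cases v with
      | nil => rfl
      | cons b vs => simp at hv
    subst this
    simp [sgword_nil, Algebra.TensorProduct.one_def]
  | cons a us ih =>
    intro v hv
    cases v with
    | nil => simp at hv
    | cons b vs =>
      have hlen : us.length = vs.length := by simpa using hv
      simp only [List.zip_cons_cons, List.map_cons, List.prod_cons, ih vs hlen,
        sgword_cons, Algebra.TensorProduct.tmul_mul_tmul]

end Segre

end Stmt19

open Stmt19

set_option maxHeartbeats 1000000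

/-- for the Yang–Baxter algebras `A`, `B`, `C` of permutation idempotent
solutions of orders `m`, `n` and `mn`, the assignment `z_{(i,a)} ↦ x_i ⊗ y_a` extends
to a well-defined injective `k`-algebra homomorphism `s_{m,n} : C → A ⊗ B` whose image
is the Segre product `A ∘ B = ⊕_s A_s ⊗ B_s` (the span of the `[u] ⊗ [v]` over pairs
of words of equal length), which is also the subalgebra generated by the `x_i ⊗ y_a`;
in particular `C ≅ A ∘ B`. -/
theorem stmt_19 (k : Type*) [Field k] (m n : ℕ) [NeZero m] [NeZero n] :
    ∃ s : SegYBA k (Fin m × Fin n) ((0 : Fin m), (0 : Fin n)) →ₐ[k]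
        (SegYBA k (Fin m) (0 : Fin m) ⊗[k] SegYBA k (Fin n) (0 : Fin n)),
      (∀ i : Fin m, ∀ a : Fin n,
        s (sgx k (Fin m × Fin n) ((0 : Fin m), (0 : Fin n)) (i, a)) =
          sgx k (Fin m) 0 i ⊗ₜ[k] sgx k (Fin n) 0 a) ∧
      Function.Injective s ∧
      ((s.range : Set (SegYBA k (Fin m) 0 ⊗[k] SegYBA k (Fin n) 0)) =
        ((Submodule.span k
          {t : SegYBA k (Fin m) 0 ⊗[k] SegYBA k (Fin n) 0 |
            ∃ (u : List (Fin m)) (v : List (Fin n)), u.length = v.length ∧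
              t = sgword k (Fin m) 0 u ⊗ₜ[k] sgword k (Fin n) 0 v} :
            Submodule k (SegYBA k (Fin m) 0 ⊗[k] SegYBA k (Fin n) 0)) :
          Set (SegYBA k (Fin m) 0 ⊗[k] SegYBA k (Fin n) 0))) ∧
      s.range = Algebra.adjoin k
        (Set.range fun ia : Fin m × Fin n =>
          sgx k (Fin m) 0 ia.1 ⊗ₜ[k] sgx k (Fin n) 0 ia.2) := by
  classical
  refine ⟨sMap k (Fin m) 0 (Fin n) 0, fun i a => sMap_sgx k (Fin m) 0 (Fin n) 0 (i, a), ?_, ?_, ?_⟩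
  · -- injectivity
    set s := sMap k (Fin m) 0 (Fin n) 0 with hs
    let pm : Sg (Fin m × Fin n) →ₙ* Sg (Fin m) :=
      ⟨fun g => ⟨g.len, g.last.1⟩, fun a b => rfl⟩
    let pn : Sg (Fin m × Fin n) →ₙ* Sg (Fin n) :=
      ⟨fun g => ⟨g.len, g.last.2⟩, fun a b => rfl⟩
    let jfun : WithOne (Sg (Fin m × Fin n)) → WithOne (Sg (Fin m)) × WithOne (Sg (Fin n)) :=
      fun g => (WithOne.map pm g, WithOne.map pn g)
    have hjinj : Function.Injective jfun := by
      intro a b hab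
      induction a using WithOne.recOneCoe with
      | one =>
        induction b using WithOne.recOneCoe with
        | one => rfl
        | coe b =>
          have h1 : (1 : WithOne (Sg (Fin m)))
              = ((⟨b.len, b.last.1⟩ : Sg (Fin m)) : WithOne (Sg (Fin m))) :=
            congrArg Prod.fst hab
          exact absurd h1.symm WithOne.coe_ne_one
      | coe a =>
        induction b using WithOne.recOneCoe with
        | one =>
          have h1 : ((⟨a.len, a.last.1⟩ : Sg (Fin m)) : WithOne (Sg (Fin m)))
              = (1 : WithOne (Sg (Fin m))) :=
            congrArg Prod.fst hab
          exact absurd h1 WithOne.coe_ne_one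
        | coe b =>
          have h1 : ((⟨a.len, a.last.1⟩ : Sg (Fin m)) : WithOne (Sg (Fin m)))
              = ((⟨b.len, b.last.1⟩ : Sg (Fin m)) : WithOne (Sg (Fin m))) :=
            congrArg Prod.fst hab
          have h2 : ((⟨a.len, a.last.2⟩ : Sg (Fin n)) : WithOne (Sg (Fin n)))
              = ((⟨b.len, b.last.2⟩ : Sg (Fin n)) : WithOne (Sg (Fin n))) :=
            congrArg Prod.snd hab
          rw [WithOne.coe_inj, Sg.mk.injEq] at h1 h2
          rw [WithOne.coe_inj]
          cases a; cases b
          simp only [Sg.mk.injEq] at h1 h2 ⊢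
          exact ⟨h1.1, Prod.ext h1.2 h2.2⟩
    set ψ := Algebra.TensorProduct.map (ρA k (Fin m) 0) (ρA k (Fin n) 0) with hψ
    have key : ∀ g : WithOne (Sg (Fin m × Fin n)),
        ψ (s (ηA k (Fin m × Fin n) (0, 0) (MonoidAlgebra.of k (WithOne (Sg (Fin m × Fin n))) g)))
          = (MonoidAlgebra.of k (WithOne (Sg (Fin m))) (jfun g).1)
              ⊗ₜ[k] (MonoidAlgebra.of k (WithOne (Sg (Fin n))) (jfun g).2) := by
      intro g
      induction g using WithOne.recOneCoe with
      | one =>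
        have hone : (MonoidAlgebra.of k (WithOne (Sg (Fin m))))
              (jfun (1 : WithOne (Sg (Fin m × Fin n)))).1 ⊗ₜ[k]
            (MonoidAlgebra.of k (WithOne (Sg (Fin n)))) (jfun 1).2 = 1 := by
          show (MonoidAlgebra.of k (WithOne (Sg (Fin m)))) 1 ⊗ₜ[k]
              (MonoidAlgebra.of k (WithOne (Sg (Fin n)))) 1 = 1
          rw [map_one, map_one, Algebra.TensorProduct.one_def]
        rw [hone, map_one, map_one, map_one, map_one]
      | coe g =>
        rw [eta_of, hs, sMap_pow_mul, hψ, Algebra.TensorProduct.map_tmul,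
          rho_pow_mul, rho_pow_mul]
        rfl
    have hτ : ∀ x : MonoidAlgebra k (WithOne (Sg (Fin m × Fin n))),
        MonoidAlgebra.tensorEquiv k
            (ψ (s (ηA k (Fin m × Fin n) (0, 0) x)))
          = MonoidAlgebra.mapDomain jfun x := by
      intro x
      induction x using MonoidAlgebra.induction_linear with
      | zero => simp only [map_zero, LinearEquiv.map_zero, MonoidAlgebra.mapDomain_zero]
      | add f g hf hg =>
        simp only [map_add, LinearEquiv.map_add, MonoidAlgebra.mapDomain_add]
        rw [hf, hg]
      | single g r =>
        have hsingle : (MonoidAlgebra.single g r : MonoidAlgebra k (WithOne (Sg (Fin m × Fin n))))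
            = r • MonoidAlgebra.of k (WithOne (Sg (Fin m × Fin n))) g := by
          rw [MonoidAlgebra.of_apply]
          exact ((MonoidAlgebra.smul_single' r g 1).trans (by rw [mul_one])).symm
        have htt : MonoidAlgebra.tensorEquiv k
            ((MonoidAlgebra.of k (WithOne (Sg (Fin m))) (jfun g).1)
              ⊗ₜ[k] (MonoidAlgebra.of k (WithOne (Sg (Fin n))) (jfun g).2))
            = MonoidAlgebra.single ((jfun g).1, (jfun g).2) 1 := by
          rw [MonoidAlgebra.of_apply, MonoidAlgebra.of_apply,
            MonoidAlgebra.tensorEquiv_single_tmul_single, mul_one]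
        rw [MonoidAlgebra.mapDomain_single, hsingle]
        simp only [map_smul, LinearEquiv.map_smul]
        rw [key g, htt, MonoidAlgebra.smul_single, smul_eq_mul, mul_one]
    intro x y hxy
    have h1 : ψ (s (ηA k (Fin m × Fin n) (0, 0) (ρA k (Fin m × Fin n) (0, 0) x)))
        = ψ (s (ηA k (Fin m × Fin n) (0, 0) (ρA k (Fin m × Fin n) (0, 0) y))) := by
      rw [eta_rho, eta_rho, hxy]
    have h2 := congrArg
      (MonoidAlgebra.tensorEquiv k (M := WithOne (Sg (Fin m))) (N := WithOne (Sg (Fin n)))) h1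
    rw [hτ, hτ] at h2
    have h3 : ρA k (Fin m × Fin n) (0, 0) x = ρA k (Fin m × Fin n) (0, 0) y :=
      MonoidAlgebra.mapDomain_injective hjinj h2
    calc x = ηA k (Fin m × Fin n) (0, 0) (ρA k (Fin m × Fin n) (0, 0) x) :=
          (eta_rho k _ _ x).symm
      _ = ηA k (Fin m × Fin n) (0, 0) (ρA k (Fin m × Fin n) (0, 0) y) := by rw [h3]
      _ = y := eta_rho k _ _ y
  · -- range = span of equal-length word tensors
    set s := sMap k (Fin m) 0 (Fin n) 0 with hs
    set S : Set (SegYBA k (Fin m) 0 ⊗[k] SegYBA k (Fin n) 0) :=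
      {t | ∃ (u : List (Fin m)) (v : List (Fin n)), u.length = v.length ∧
        t = sgword k (Fin m) 0 u ⊗ₜ[k] sgword k (Fin n) 0 v} with hS
    have hmulS : ∀ x y : SegYBA k (Fin m) 0 ⊗[k] SegYBA k (Fin n) 0,
        x ∈ Submodule.span k S → y ∈ Submodule.span k S → x * y ∈ Submodule.span k S := by
      intro x y hx hy
      have hSS : S * S ⊆ (Submodule.span k S : Set (SegYBA k (Fin m) 0 ⊗[k] SegYBA k (Fin n) 0)) := by
        rintro t ⟨t1, ht1, t2, ht2, rfl⟩
        dsimp only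
        obtain ⟨u1, v1, hl1, rfl⟩ := ht1
        obtain ⟨u2, v2, hl2, rfl⟩ := ht2
        refine Submodule.subset_span ⟨u1 ++ u2, v1 ++ v2, by simp [hl1, hl2], ?_⟩
        rw [Algebra.TensorProduct.tmul_mul_tmul, sgword_append, sgword_append]
      have hmm := Submodule.mul_mem_mul hx hy
      rw [Submodule.span_mul_span] at hmm
      exact Submodule.span_le.mpr hSS hmm
    apply Set.eq_of_subset_of_subset
    · rintro t ⟨c, rfl⟩
      obtain ⟨z, rfl⟩ := RingQuot.mkAlgHom_surjective k (segRel k (Fin m × Fin n) (0, 0)) c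
      induction z using FreeAlgebra.induction with
      | grade0 r =>
        show s (RingQuot.mkAlgHom k (segRel k (Fin m × Fin n) (0, 0)) (algebraMap k _ r))
            ∈ (Submodule.span k S : Set (SegYBA k (Fin m) 0 ⊗[k] SegYBA k (Fin n) 0))
        rw [AlgHom.commutes, AlgHom.commutes]
        have h1 : (1 : SegYBA k (Fin m) 0 ⊗[k] SegYBA k (Fin n) 0) ∈ Submodule.span k S :=
          Submodule.subset_span ⟨[], [], rfl, by
            rw [sgword_nil, sgword_nil, Algebra.TensorProduct.one_def]⟩
        rw [Algebra.algebraMap_eq_smul_one]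
        exact Submodule.smul_mem _ r h1
      | grade1 p =>
        have hp : s (RingQuot.mkAlgHom k (segRel k (Fin m × Fin n) (0, 0)) (ι k p))
            = sgword k (Fin m) 0 [p.1] ⊗ₜ[k] sgword k (Fin n) 0 [p.2] := by
          rw [sgword_singleton, sgword_singleton]
          exact sMap_sgx k (Fin m) 0 (Fin n) 0 p
        show s (RingQuot.mkAlgHom k (segRel k (Fin m × Fin n) (0, 0)) (ι k p))
            ∈ (Submodule.span k S : Set (SegYBA k (Fin m) 0 ⊗[k] SegYBA k (Fin n) 0))
        rw [hp]
        exact Submodule.subset_span ⟨[p.1], [p.2], rfl, rfl⟩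
      | mul a b ha hb =>
        show s (RingQuot.mkAlgHom k (segRel k (Fin m × Fin n) (0, 0)) (a * b))
            ∈ (Submodule.span k S : Set (SegYBA k (Fin m) 0 ⊗[k] SegYBA k (Fin n) 0))
        rw [map_mul, map_mul]
        exact hmulS _ _ ha hb
      | add a b ha hb =>
        show s (RingQuot.mkAlgHom k (segRel k (Fin m × Fin n) (0, 0)) (a + b))
            ∈ (Submodule.span k S : Set (SegYBA k (Fin m) 0 ⊗[k] SegYBA k (Fin n) 0))
        rw [map_add, map_add]
        exact Submodule.add_mem _ ha hb
    · have hsub : S ⊆ (s.range : Set (SegYBA k (Fin m) 0 ⊗[k] SegYBA k (Fin n) 0)) := by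
        rintro t ⟨u, v, hlen, rfl⟩
        refine ⟨sgword k (Fin m × Fin n) (0, 0) (u.zip v), ?_⟩
        show sMap k (Fin m) 0 (Fin n) 0 (sgword k (Fin m × Fin n) (0, 0) (u.zip v))
            = sgword k (Fin m) 0 u ⊗ₜ[k] sgword k (Fin n) 0 v
        rw [sMap_sgword, zip_tmul k (Fin m) 0 (Fin n) 0 u v hlen]
      intro t ht
      exact (Submodule.span_le.mpr hsub : Submodule.span k S ≤ Subalgebra.toSubmodule s.range) ht
  · -- range = adjoin
    set s := sMap k (Fin m) 0 (Fin n) 0 with hs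
    apply le_antisymm
    · rintro t ⟨c, rfl⟩
      obtain ⟨z, rfl⟩ := RingQuot.mkAlgHom_surjective k (segRel k (Fin m × Fin n) (0, 0)) c
      induction z using FreeAlgebra.induction with
      | grade0 r =>
        show s (RingQuot.mkAlgHom k (segRel k (Fin m × Fin n) (0, 0)) (algebraMap k _ r)) ∈ _
        rw [AlgHom.commutes, AlgHom.commutes]
        exact Subalgebra.algebraMap_mem _ r
      | grade1 p =>
        have hp : s (RingQuot.mkAlgHom k (segRel k (Fin m × Fin n) (0, 0)) (ι k p))
            = sgx k (Fin m) 0 p.1 ⊗ₜ[k] sgx k (Fin n) 0 p.2 := sMap_sgx k (Fin m) 0 (Fin n) 0 p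
        show s (RingQuot.mkAlgHom k (segRel k (Fin m × Fin n) (0, 0)) (ι k p)) ∈ _
        rw [hp]
        exact Algebra.subset_adjoin ⟨p, rfl⟩
      | mul a b ha hb =>
        show s (RingQuot.mkAlgHom k (segRel k (Fin m × Fin n) (0, 0)) (a * b)) ∈ _
        rw [map_mul, map_mul]
        exact Subalgebra.mul_mem _ ha hb
      | add a b ha hb =>
        show s (RingQuot.mkAlgHom k (segRel k (Fin m × Fin n) (0, 0)) (a + b)) ∈ _
        rw [map_add, map_add]
        exact Subalgebra.add_mem _ ha hb
    · rw [Algebra.adjoin_le_iff]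
      rintro t ⟨p, rfl⟩
      exact ⟨sgx k (Fin m × Fin n) (0, 0) p, sMap_sgx k (Fin m) 0 (Fin n) 0 p⟩

end
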